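/- Let G be a graph on n vertices with arboricity at most λ and let d > 2λ. In the H-partition produced by the peeling algorithm, for every i ≥ 1, the number of vertices in layers of index at least i is at most n·(2λ/d)^{i-1}. -/

import Mathlib

def HasArboricityAtMost {V : Type*} (G : SimpleGraph V) (lam : ℕ) : Prop :=
  ∃ F : Fin lam → SimpleGraph V,
    (∀ i, (F i).IsAcyclic) ∧ (∀ i, F i ≤ G) ∧
    (∀ e ∈ G.edgeSet, ∃! i, e ∈ (F i).edgeSet)

/-- The greedy peeling process: `peel G d i` is the set of vertices remaining after
`i` rounds (equivalently, the set of vertices in layers of index at least `i+1`,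
1-indexed); each round removes all vertices of remaining degree at most `d`. -/
def peel {V : Type*} [Fintype V] [DecidableEq V] (G : SimpleGraph V)
    [DecidableRel G.Adj] (d : ℕ) : ℕ → Finset V
  | 0 => Finset.univ
  | i + 1 => (peel G d i).filter (fun v => d < (G.neighborFinset v ∩ peel G d i).card)

section Aux

open SimpleGraph

variable {V : Type*}

/-- In a path ending at `v`, there is at most one edge incident to `v`. -/
private lemma last_edge_eq {H : SimpleGraph V} :
    ∀ {u v : V} (p : H.Walk u v), p.IsPath → ∀ {w₁ w₂ : V},
      s(v, w₁) ∈ p.edges → s(v, w₂) ∈ p.edges → w₁ = w₂ := by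
  intro u v p
  induction p with
  | nil => intro _ w₁ w₂ h1 _; simp at h1
  | @cons u b v h q ih =>
    intro hp w₁ w₂ h1 h2
    rw [SimpleGraph.Walk.cons_isPath_iff] at hp
    obtain ⟨hq, hu⟩ := hp
    have hvu : v ≠ u := by
      intro hvu; exact hu (hvu ▸ q.end_mem_support)
    have hloop : ∀ w : V, s(v, w) = s(u, b) → b = v ∧ w = u := by
      intro w hw
      rw [Sym2.eq_iff] at hw
      rcases hw with ⟨h1', h2'⟩ | ⟨h1', h2'⟩
      · exact absurd h1' hvu
      · exact ⟨h1'.symm, h2'⟩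
    have hnil : ∀ w : V, s(v, w) = s(u, b) → q.edges = [] := by
      intro w hw
      obtain ⟨hbv, _⟩ := hloop w hw
      subst hbv
      cases q with
      | nil => rfl
      | cons h' q' =>
        rw [SimpleGraph.Walk.cons_isPath_iff] at hq
        exact absurd (q'.end_mem_support) hq.2
    rw [SimpleGraph.Walk.edges_cons, List.mem_cons] at h1 h2
    rcases h1 with h1 | h1
    · rcases h2 with h2 | h2
      · rw [(hloop w₁ h1).2, (hloop w₂ h2).2]
      · rw [hnil w₁ h1] at h2; simp at h2
    · rcases h2 with h2 | h2
      · rw [hnil w₂ h2] at h1; simp at h1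
      · exact ih hq h1 h2

/-- A nonempty vertex set in an acyclic graph contains a vertex with at most one
neighbor inside the set. -/
private lemma exists_leaf [Fintype V] [DecidableEq V] {H : SimpleGraph V}
    [DecidableRel H.Adj] (hH : H.IsAcyclic) {S : Finset V} (hS : S.Nonempty) :
    ∃ v ∈ S, (S.filter (H.Adj v)).card ≤ 1 := by
  classical
  obtain ⟨v₀, hv₀⟩ := hS
  set P : ℕ → Prop := fun n => ∃ (u v : V) (p : H.Walk u v),
    p.IsPath ∧ (∀ x ∈ p.support, x ∈ S) ∧ p.length = n with hP
  set b : ℕ := Fintype.card V with hb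
  have hP0 : P 0 := ⟨v₀, v₀, Walk.nil, by simp, by simpa using hv₀, rfl⟩
  set N : ℕ := Nat.findGreatest P b with hN
  have hPN : P N := Nat.findGreatest_spec (Nat.zero_le b) hP0
  obtain ⟨u, v, p, hp, hsub, hlen⟩ := hPN
  refine ⟨v, hsub _ p.end_mem_support, ?_⟩
  have key : ∀ w : V, H.Adj v w → w ∈ S → s(v, w) ∈ p.edges := by
    intro w hvw hwS
    by_cases hws : w ∈ p.support
    · set q : H.Walk w v := p.dropUntil w hws with hq
      have hqp : q.IsPath := hp.dropUntil hws
      by_contra hne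
      have hne' : s(v, w) ∉ q.edges := fun h => hne (p.edges_dropUntil_subset hws h)
      have hcyc : (Walk.cons hvw q).IsCycle :=
        (SimpleGraph.Walk.cons_isCycle_iff q hvw).mpr ⟨hqp, hne'⟩
      exact hH _ hcyc
    · exfalso
      set r : H.Walk w u := Walk.cons hvw.symm p.reverse with hr
      have hrp : r.IsPath := by
        rw [hr, SimpleGraph.Walk.cons_isPath_iff]
        refine ⟨hp.reverse, ?_⟩
        rwa [SimpleGraph.Walk.support_reverse, List.mem_reverse]
      have hrlen : r.length = N + 1 := by
        rw [hr, SimpleGraph.Walk.length_cons, SimpleGraph.Walk.length_reverse, hlen]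
      have hrb : N + 1 ≤ b := by
        have := hrp.length_lt
        omega
      refine Nat.findGreatest_is_greatest (by omega : N < N + 1) hrb ?_
      refine ⟨w, u, r, hrp, ?_, hrlen⟩
      intro x hx
      rw [hr, SimpleGraph.Walk.support_cons, List.mem_cons] at hx
      rcases hx with rfl | hx
      · exact hwS
      · exact hsub _ (by rwa [SimpleGraph.Walk.support_reverse, List.mem_reverse] at hx)
  rw [Finset.card_le_one]
  intro w₁ h1 w₂ h2
  rw [Finset.mem_filter] at h1 h2
  exact last_edge_eq p hp (key w₁ h1.2 h1.1) (key w₂ h2.2 h2.1)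

/-- Degree sum within any vertex set of an acyclic graph is at most `2 |S|`. -/
private lemma degsum_acyclic [Fintype V] [DecidableEq V] {H : SimpleGraph V}
    [DecidableRel H.Adj] (hH : H.IsAcyclic) (S : Finset V) :
    ∑ v ∈ S, (S.filter (H.Adj v)).card ≤ 2 * S.card := by
  classical
  induction S using Finset.strongInduction with
  | _ S ihS =>
    rcases S.eq_empty_or_nonempty with rfl | hS
    · simp
    obtain ⟨v, hv, hdeg⟩ := exists_leaf hH hS
    set S' : Finset V := S.erase v with hS'
    have hvS' : v ∉ S' := Finset.notMem_erase v S
    have hins : insert v S' = S := Finset.insert_erase hv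
    have hsub : S' ⊂ S := Finset.erase_ssubset hv
    have ih := ihS S' hsub
    have hd1 : (S'.filter (H.Adj v)).card ≤ 1 :=
      le_trans (Finset.card_le_card (Finset.filter_subset_filter _ (Finset.erase_subset v S)))
        hdeg
    have hd2 : (S'.filter (fun u => H.Adj u v)).card ≤ 1 := by
      have : S'.filter (fun u => H.Adj u v) = S'.filter (H.Adj v) := by
        apply Finset.filter_congr
        intro x _
        simp [SimpleGraph.adj_comm]
      rw [this]; exact hd1
    rw [← hins]
    rw [Finset.sum_insert hvS']
    have hterm1 : ((insert v S').filter (H.Adj v)).card ≤ 1 := by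
      rw [Finset.filter_insert]
      split_ifs with h
      · exact absurd h (H.irrefl)
      · exact hd1
    have hterm2 : ∑ u ∈ S', ((insert v S').filter (H.Adj u)).card ≤
        (∑ u ∈ S', (S'.filter (H.Adj u)).card) + 1 := by
      have step : ∀ u ∈ S', ((insert v S').filter (H.Adj u)).card ≤
          (S'.filter (H.Adj u)).card + (if H.Adj u v then 1 else 0) := by
        intro u _
        rw [Finset.filter_insert]
        split_ifs with h
        · exact Finset.card_insert_le _ _
        · simp
      calc ∑ u ∈ S', ((insert v S').filter (H.Adj u)).card
          ≤ ∑ u ∈ S', ((S'.filter (H.Adj u)).card + (if H.Adj u v then 1 else 0)) :=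
            Finset.sum_le_sum step
        _ = (∑ u ∈ S', (S'.filter (H.Adj u)).card) +
            ∑ u ∈ S', (if H.Adj u v then 1 else 0) := by rw [Finset.sum_add_distrib]
        _ ≤ (∑ u ∈ S', (S'.filter (H.Adj u)).card) + 1 := by
            have : ∑ u ∈ S', (if H.Adj u v then 1 else 0) =
                (S'.filter (fun u => H.Adj u v)).card := (Finset.card_filter _ _).symm
            rw [this]
            exact Nat.add_le_add_left hd2 _
    have hcard : (insert v S').card = S'.card + 1 := Finset.card_insert_of_notMem hvS'
    calc ((insert v S').filter (H.Adj v)).card +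
          ∑ u ∈ S', ((insert v S').filter (H.Adj u)).card
        ≤ 1 + ((∑ u ∈ S', (S'.filter (H.Adj u)).card) + 1) :=
          Nat.add_le_add hterm1 hterm2
      _ ≤ 1 + (2 * S'.card + 1) := by omega
      _ = 2 * (insert v S').card := by rw [hcard]; ring

/-- Degree sum within any vertex set of a graph with arboricity at most `lam`. -/
private lemma degsum_arb [Fintype V] [DecidableEq V] {G : SimpleGraph V}
    [DecidableRel G.Adj] {lam : ℕ} (harb : HasArboricityAtMost G lam) (S : Finset V) :
    ∑ v ∈ S, (S.filter (G.Adj v)).card ≤ 2 * lam * S.card := by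
  classical
  obtain ⟨F, hac, hle, hpart⟩ := harb
  have key : ∀ v : V, (S.filter (G.Adj v)).card ≤
      ∑ i : Fin lam, (S.filter ((F i).Adj v)).card := by
    intro v
    have hsub : S.filter (G.Adj v) ⊆
        Finset.univ.biUnion (fun i : Fin lam => S.filter ((F i).Adj v)) := by
      intro w hw
      rw [Finset.mem_filter] at hw
      obtain ⟨i, hi, _⟩ := hpart s(v, w) ((SimpleGraph.mem_edgeSet G).mpr hw.2)
      rw [Finset.mem_biUnion]
      exact ⟨i, Finset.mem_univ i, Finset.mem_filter.mpr ⟨hw.1, hi⟩⟩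
    exact le_trans (Finset.card_le_card hsub) (Finset.card_biUnion_le)
  calc ∑ v ∈ S, (S.filter (G.Adj v)).card
      ≤ ∑ v ∈ S, ∑ i : Fin lam, (S.filter ((F i).Adj v)).card :=
        Finset.sum_le_sum (fun v _ => key v)
    _ = ∑ i : Fin lam, ∑ v ∈ S, (S.filter ((F i).Adj v)).card := Finset.sum_comm
    _ ≤ ∑ _i : Fin lam, 2 * S.card :=
        Finset.sum_le_sum (fun i _ => degsum_acyclic (hac i) S)
    _ = lam * (2 * S.card) := by simp [Finset.sum_const, mul_comm]
    _ = 2 * lam * S.card := by ring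

end Aux

/-- for a graph on `n` vertices with arboricity at most `lam` and
`d > 2 * lam`, the number of vertices in layers of index at least `i+1` (1-indexed),
i.e. `|peel G d i|`, is at most `n * (2 * lam / d) ^ i`. -/
theorem H_partition_layer_size {V : Type*} [Fintype V] [DecidableEq V]
    (G : SimpleGraph V) [DecidableRel G.Adj] (n lam d : ℕ)
    (hn : n = Fintype.card V)
    (harb : HasArboricityAtMost G lam) (hd : 2 * lam < d) :
    ∀ i : ℕ, ((peel G d i).card : ℝ) ≤ (n : ℝ) * ((2 * lam : ℝ) / d) ^ i := by
  classical
  have hd0 : (0 : ℝ) < d := by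
    have : 0 < d := by omega
    exact_mod_cast this
  have hratio : (0 : ℝ) ≤ (2 * lam : ℝ) / d := by positivity
  intro i
  induction i with
  | zero =>
    simp [peel, Finset.card_univ, hn]
  | succ i ih =>
    set S : Finset V := peel G d i with hSdef
    have hstep : d * (peel G d (i + 1)).card ≤ 2 * lam * S.card := by
      set T : Finset V := peel G d (i + 1) with hTdef
      have hT : T = S.filter (fun v => d < (G.neighborFinset v ∩ S).card) := rfl
      have h1 : (d + 1) * T.card ≤ ∑ v ∈ T, (G.neighborFinset v ∩ S).card := by
        calc (d + 1) * T.card = ∑ _v ∈ T, (d + 1) := by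
              rw [Finset.sum_const, smul_eq_mul, mul_comm]
          _ ≤ ∑ v ∈ T, (G.neighborFinset v ∩ S).card := by
              apply Finset.sum_le_sum
              intro v hv
              rw [hT, Finset.mem_filter] at hv
              omega
      have h2 : ∑ v ∈ T, (G.neighborFinset v ∩ S).card ≤
          ∑ v ∈ S, (G.neighborFinset v ∩ S).card := by
        apply Finset.sum_le_sum_of_subset
        rw [hT]; exact Finset.filter_subset _ _
      have h3 : ∑ v ∈ S, (G.neighborFinset v ∩ S).card =
          ∑ v ∈ S, (S.filter (G.Adj v)).card := by
        apply Finset.sum_congr rfl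
        intro v _
        congr 1
        ext w
        simp [SimpleGraph.mem_neighborFinset, and_comm]
      have h4 := degsum_arb harb S
      calc d * T.card ≤ (d + 1) * T.card := by
            apply Nat.mul_le_mul_right; omega
        _ ≤ 2 * lam * S.card := by rw [h3] at h2; omega
    have hreal : ((peel G d (i + 1)).card : ℝ) ≤ (2 * lam : ℝ) / d * S.card := by
      rw [div_mul_eq_mul_div, le_div_iff₀ hd0]
      have : (d : ℝ) * (peel G d (i + 1)).card ≤ (2 * lam : ℝ) * S.card := by
        exact_mod_cast hstep
      linarith
    calc ((peel G d (i + 1)).card : ℝ)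
        ≤ (2 * lam : ℝ) / d * S.card := hreal
      _ ≤ (2 * lam : ℝ) / d * ((n : ℝ) * ((2 * lam : ℝ) / d) ^ i) :=
          mul_le_mul_of_nonneg_left ih hratio
      _ = (n : ℝ) * ((2 * lam : ℝ) / d) ^ (i + 1) := by ring
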